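/- Let K be a category with kernel pairs and coequalizers of kernel pairs and with effective congruences, and let G be a varietal generator of K. Then the hom-functor U = K(G,−) : K → Set is monadic (it has a left adjoint M ↦ M·G and the comparison functor to the Eilenberg–Moore category of the induced monad is an equivalence), and the induced monad on Set preserves filtered colimits. -/

import Mathlib

open CategoryTheory

universe v u

namespace Paper

variable {K : Type u} [Category.{v} K]

/-- `C` together with the injections `ι` is a coproduct of the family `Y`. -/
def IsCoproductOf {M : Type v} (Y : M → K) (C : K) (ι : ∀ m, Y m ⟶ C) : Prop :=
  ∀ (Z : K) (g : ∀ m, Y m ⟶ Z), ∃! d : C ⟶ Z, ∀ m, ι m ≫ d = g m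

/-- `G` has copowers: all set-indexed coproducts of copies of `G` exist. -/
def HasCopowers (G : K) : Prop :=
  ∀ M : Type v, ∃ (C : K) (ι : M → (G ⟶ C)), IsCoproductOf (fun _ : M => G) C ι

/-- `e` is a coequalizer of the pair `r0, r1`. -/
def IsCoequalizerOf {R A B : K} (r0 r1 : R ⟶ A) (e : A ⟶ B) : Prop :=
  r0 ≫ e = r1 ≫ e ∧
    ∀ (Z : K) (f : A ⟶ Z), r0 ≫ f = r1 ≫ f → ∃! g : B ⟶ Z, e ≫ g = f

/-- `e` is a regular epimorphism: a coequalizer of some parallel pair. -/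
def IsRegEpi {A B : K} (e : A ⟶ B) : Prop :=
  ∃ (R : K) (r0 r1 : R ⟶ A), IsCoequalizerOf r0 r1 e

/-- `r0, r1` is a kernel pair of `f`. -/
def IsKernelPairOf {R A B : K} (r0 r1 : R ⟶ A) (f : A ⟶ B) : Prop :=
  r0 ≫ f = r1 ≫ f ∧
    ∀ (S : K) (s0 s1 : S ⟶ A), s0 ≫ f = s1 ≫ f →
      ∃! t : S ⟶ R, t ≫ r0 = s0 ∧ t ≫ r1 = s1

def HasKernelPairs (K : Type u) [Category.{v} K] : Prop :=
  ∀ (A B : K) (f : A ⟶ B), ∃ (R : K) (r0 r1 : R ⟶ A), IsKernelPairOf r0 r1 f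

def HasCoequalizersOfKernelPairs (K : Type u) [Category.{v} K] : Prop :=
  ∀ (R A B : K) (f : A ⟶ B) (r0 r1 : R ⟶ A), IsKernelPairOf r0 r1 f →
    ∃ (C : K) (e : A ⟶ C), IsCoequalizerOf r0 r1 e

/-- `e` is a strong (extremal) epimorphism. -/
def IsExtremalEpi {A B : K} (e : A ⟶ B) : Prop :=
  Epi e ∧ ∀ (C : K) (g : A ⟶ C) (m : C ⟶ B), Mono m → g ≫ m = e → IsIso m

/-- `G` is a generator: every canonical morphism `[h] : ∐_{h : G ⟶ X} G ⟶ X` is epic. -/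
def GeneratorP (G : K) : Prop :=
  ∀ (X C : K) (ι : (G ⟶ X) → (G ⟶ C)), IsCoproductOf (fun _ : (G ⟶ X) => G) C ι →
    ∀ d : C ⟶ X, (∀ h, ι h ≫ d = h) → Epi d

/-- `G` is a strong generator: every canonical morphism is a strong (extremal) epimorphism. -/
def StrongGenerator (G : K) : Prop :=
  ∀ (X C : K) (ι : (G ⟶ X) → (G ⟶ C)), IsCoproductOf (fun _ : (G ⟶ X) => G) C ι →
    ∀ d : C ⟶ X, (∀ h, ι h ≫ d = h) → IsExtremalEpi d

/-- `G` is a regular generator: every canonical morphism is a regular epimorphism. -/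
def RegularGenerator (G : K) : Prop :=
  ∀ (X C : K) (ι : (G ⟶ X) → (G ⟶ C)), IsCoproductOf (fun _ : (G ⟶ X) => G) C ι →
    ∀ d : C ⟶ X, (∀ h, ι h ≫ d = h) → IsRegEpi d

/-- `G` is a regular projective: morphisms from `G` factor through regular epimorphisms. -/
def RegularProjective (G : K) : Prop :=
  ∀ (A B : K) (e : A ⟶ B), IsRegEpi e → ∀ g : G ⟶ B, ∃ f : G ⟶ A, f ≫ e = g

/-- `G` is abstractly finite: every morphism from `G` into a copower `M·G` factors
through the subcopower induced by a finite subset `M₀ ⊆ M`. -/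
def AbstractlyFinite (G : K) : Prop :=
  ∀ (M : Type v) (C : K) (ι : M → (G ⟶ C)), IsCoproductOf (fun _ : M => G) C ι →
    ∀ f : G ⟶ C, ∃ M₀ : Set M, M₀.Finite ∧
      ∀ (C₀ : K) (ι₀ : M₀ → (G ⟶ C₀)) (u : C₀ ⟶ C),
        IsCoproductOf (fun _ : M₀ => G) C₀ ι₀ → (∀ m : M₀, ι₀ m ≫ u = ι m.1) →
          ∃ g : G ⟶ C₀, g ≫ u = f

/-- `G` is finitely generated: its hom-functor `K(G,−) : K ⥤ Set` preserves colimits of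
directed diagrams all of whose connecting morphisms are monomorphisms. -/
def FinitelyGenerated (G : K) : Prop :=
  ∀ (J : Type v) [Preorder J], IsDirected J (· ≤ ·) → Nonempty J →
    ∀ (D : J ⥤ K), (∀ (i j : J) (f : i ⟶ j), Mono (D.map f)) →
      ∀ (c : Limits.Cocone D), Nonempty (Limits.IsColimit c) →
        Nonempty (Limits.IsColimit ((coyoneda.obj (Opposite.op G)).mapCocone c))

/-- The pair `s0, s1` factorizes through the relation `r0, r1`. -/
def Factors {R A S : K} (r0 r1 : R ⟶ A) (s0 s1 : S ⟶ A) : Prop :=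
  ∃ t : S ⟶ R, t ≫ r0 = s0 ∧ t ≫ r1 = s1

def CollectivelyMonic {R A : K} (r0 r1 : R ⟶ A) : Prop :=
  ∀ (S : K) (f g : S ⟶ R), f ≫ r0 = g ≫ r0 → f ≫ r1 = g ≫ r1 → f = g

/-- A congruence: a collectively monic pair which is reflexive, symmetric and transitive. -/
def IsCongruence {R A : K} (r0 r1 : R ⟶ A) : Prop :=
  CollectivelyMonic r0 r1 ∧
  (∀ (S : K) (s : S ⟶ A), Factors r0 r1 s s) ∧
  (∀ (S : K) (s s' : S ⟶ A), Factors r0 r1 s s' → Factors r0 r1 s' s) ∧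
  (∀ (S : K) (s s' s'' : S ⟶ A),
    Factors r0 r1 s s' → Factors r0 r1 s' s'' → Factors r0 r1 s s'')

def HasCoequalizersOfCongruences (K : Type u) [Category.{v} K] : Prop :=
  ∀ (R A : K) (r0 r1 : R ⟶ A), IsCongruence r0 r1 →
    ∃ (C : K) (e : A ⟶ C), IsCoequalizerOf r0 r1 e

/-- `K` has effective congruences: every congruence is a kernel pair. -/
def EffectiveCongruences (K : Type u) [Category.{v} K] : Prop :=
  ∀ (R A : K) (r0 r1 : R ⟶ A), IsCongruence r0 r1 →
    ∃ (B : K) (f : A ⟶ B), IsKernelPairOf r0 r1 f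

/-- A coequalizer diagram in `Set`. -/
def IsCoequalizerOfTypes {R A C : Type v} (u v : R → A) (q : A → C) : Prop :=
  q ∘ u = q ∘ v ∧
    ∀ {Z : Type v} (h : A → Z), h ∘ u = h ∘ v → ∃! k : C → Z, k ∘ q = h

/-- `G` is effective: its hom-functor sends coequalizers of congruences to
coequalizers in `Set`. -/
def EffectiveObject (G : K) : Prop :=
  ∀ (R A : K) (r0 r1 : R ⟶ A), IsCongruence r0 r1 →
    ∀ (C : K) (e : A ⟶ C), IsCoequalizerOf r0 r1 e →
      IsCoequalizerOfTypes (fun f : G ⟶ R => f ≫ r0) (fun f : G ⟶ R => f ≫ r1)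
        (fun g : G ⟶ A => g ≫ e)

/-- The square with projections `f', e'` is a pullback of `e` along `f`. -/
def IsPullbackOf {P A B Q : K} (f' : P ⟶ A) (e' : P ⟶ B) (e : A ⟶ Q) (f : B ⟶ Q) : Prop :=
  f' ≫ e = e' ≫ f ∧
    ∀ (S : K) (a : S ⟶ A) (b : S ⟶ B), a ≫ e = b ≫ f →
      ∃! t : S ⟶ P, t ≫ f' = a ∧ t ≫ e' = b

/-- A varietal generator: a strong generator with copowers which is abstractly finite
and regularly projective. -/
def VarietalGenerator (G : K) : Prop :=
  HasCopowers G ∧ StrongGenerator G ∧ AbstractlyFinite G ∧ RegularProjective G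

/-- Barr-exactness: kernel pairs and their coequalizers exist, congruences are effective,
and regular epimorphisms are stable under pullback. -/
def BarrExact (K : Type u) [Category.{v} K] : Prop :=
  HasKernelPairs K ∧ HasCoequalizersOfKernelPairs K ∧ EffectiveCongruences K ∧
    ∀ (P A B Q : K) (f' : P ⟶ A) (e' : P ⟶ B) (e : A ⟶ Q) (f : B ⟶ Q),
      IsPullbackOf f' e' e f → IsRegEpi e → IsRegEpi e'

/-! ### Auxiliary infrastructure -/

section Aux

variable {K : Type u} [Category.{v} K] {G : K}

/-- Chosen copower data for a generator with copowers. -/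
structure CopData (G : K) where
  cop : Type v → K
  inj : ∀ M : Type v, M → (G ⟶ cop M)
  isCop : ∀ M : Type v, IsCoproductOf (fun _ : M => G) (cop M) (inj M)

noncomputable def CopData.ofHasCopowers (h : HasCopowers G) : CopData G where
  cop M := (h M).choose
  inj M := (h M).choose_spec.choose
  isCop M := (h M).choose_spec.choose_spec

namespace CopData

variable (D : CopData G)

/-- The universal map out of a copower. -/
noncomputable def desc {M : Type v} {Z : K} (gs : M → (G ⟶ Z)) : D.cop M ⟶ Z :=
  (D.isCop M Z gs).choose

@[simp] lemma inj_desc {M : Type v} {Z : K} (gs : M → (G ⟶ Z)) (m : M) :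
    D.inj M m ≫ D.desc gs = gs m :=
  (D.isCop M Z gs).choose_spec.1 m

lemma hom_ext {M : Type v} {Z : K} {d d' : D.cop M ⟶ Z}
    (h : ∀ m : M, D.inj M m ≫ d = D.inj M m ≫ d') : d = d' := by
  have h1 := (D.isCop M Z (fun m => D.inj M m ≫ d)).choose_spec.2
  rw [h1 d (fun m => rfl), h1 d' (fun m => (h m).symm)]

/-- The canonical morphism `∐_{h : G ⟶ S} G ⟶ S`. -/
noncomputable def can (S : K) : D.cop (G ⟶ S) ⟶ S := D.desc (fun h => h)

@[simp] lemma inj_can (S : K) (h : G ⟶ S) : D.inj (G ⟶ S) h ≫ D.can S = h := D.inj_desc _ h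

end CopData

end Aux
section Aux2

variable {K : Type u} [Category.{v} K] {G : K} (D : CopData G)
include D

/-- The canonical morphism is an extremal epi when `G` is a strong generator. -/
lemma can_extremal (hSG : StrongGenerator G) (S : K) : IsExtremalEpi (D.can S) :=
  hSG S (D.cop (G ⟶ S)) (D.inj (G ⟶ S)) (D.isCop _) (D.can S) (fun h => D.inj_can S h)

lemma can_epi (hSG : StrongGenerator G) (S : K) : Epi (D.can S) :=
  (can_extremal D hSG S).1

/-- Two morphisms agreeing on all `G`-points are equal (generator property). -/
lemma points_ext (hSG : StrongGenerator G) {S T : K} {u v : S ⟶ T}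
    (h : ∀ x : G ⟶ S, x ≫ u = x ≫ v) : u = v := by
  have key : D.can S ≫ u = D.can S ≫ v := by
    apply D.hom_ext
    intro m
    simp only [← Category.assoc, D.inj_can]
    exact h m
  haveI : Epi (D.can S) := can_epi D hSG S
  exact (cancel_epi (D.can S)).mp key

omit D in
/-- Lifting `G`-points through regular epis (regular projectivity). -/
lemma point_lift (hRP : RegularProjective G) {A B : K} {e : A ⟶ B} (he : IsRegEpi e)
    (y : G ⟶ B) : ∃ x : G ⟶ A, x ≫ e = y :=
  hRP A B e he y

omit D in
lemma coeq_epi {R A B : K} {r0 r1 : R ⟶ A} {e : A ⟶ B} (h : IsCoequalizerOf r0 r1 e) :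
    Epi e := by
  constructor
  intro Z u v huv
  obtain ⟨w, hw, hu⟩ := h.2 Z (e ≫ u) (by rw [← Category.assoc, ← Category.assoc, h.1])
  rw [hu u rfl, hu v huv.symm]

omit D in
/-- Kernel pairs are collectively monic. -/
lemma kernel_pair_monic {R A B : K} {r0 r1 : R ⟶ A} {f : A ⟶ B}
    (h : IsKernelPairOf r0 r1 f) : CollectivelyMonic r0 r1 := by
  intro S a b h0 h1
  obtain ⟨t, ht, hu⟩ := h.2 S (a ≫ r0) (a ≫ r1)
    (by rw [Category.assoc, Category.assoc, h.1])
  rw [hu a ⟨rfl, rfl⟩, hu b ⟨h0.symm, h1.symm⟩]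

omit D in
lemma assoc_push {X Y Z W : K} {a : X ⟶ Y} {b : Y ⟶ Z} {c : X ⟶ Z} (h : a ≫ b = c)
    (d : Z ⟶ W) : a ≫ b ≫ d = c ≫ d := by
  rw [← Category.assoc, h]

end Aux2
section Aux3

variable {K : Type u} [Category.{v} K] {G : K} (D : CopData G)
include D

/-- An extremal epi is the coequalizer of any of its kernel pairs. -/
lemma extremal_coeq (hck : HasCoequalizersOfKernelPairs K) (hSG : StrongGenerator G)
    (hRP : RegularProjective G) {R A B : K} {e : A ⟶ B} (hex : IsExtremalEpi e)
    {k0 k1 : R ⟶ A} (hk : IsKernelPairOf k0 k1 e) : IsCoequalizerOf k0 k1 e := by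
  obtain ⟨C, c, hc⟩ := hck R A B e k0 k1 hk
  obtain ⟨m, hm, hmu⟩ := hc.2 B e hk.1
  have hcreg : IsRegEpi c := ⟨R, k0, k1, hc⟩
  have hptinj : ∀ y z : G ⟶ C, y ≫ m = z ≫ m → y = z := by
    intro y z hyz
    obtain ⟨y', hy'⟩ := hRP A C c hcreg y
    obtain ⟨z', hz'⟩ := hRP A C c hcreg z
    have hyz' : y' ≫ e = z' ≫ e := by
      rw [← hm, ← Category.assoc, ← Category.assoc, hy', hz', hyz]
    obtain ⟨w, ⟨hw0, hw1⟩, _⟩ := hk.2 G y' z' hyz'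
    rw [← hy', ← hz', ← hw0, ← hw1, Category.assoc, Category.assoc, hc.1]
  have hmono : Mono m := by
    constructor
    intro Z u v huv
    apply points_ext D hSG
    intro x
    exact hptinj _ _ (by rw [Category.assoc, Category.assoc, huv])
  have hiso : IsIso m := hex.2 C c m hmono hm
  constructor
  · rw [← hm, ← Category.assoc, ← Category.assoc, hc.1]
  · intro Z f hf
    obtain ⟨g, hg, hgu⟩ := hc.2 Z f hf
    refine ⟨inv m ≫ g, ?_, ?_⟩
    · show e ≫ (inv m ≫ g) = f
      rw [← hm, Category.assoc, IsIso.hom_inv_id_assoc, hg]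
    · intro y hy
      have hmy : m ≫ y = g := hgu _ (show c ≫ (m ≫ y) = f by
        rw [← Category.assoc, hm]; exact hy)
      rw [← hmy, IsIso.inv_hom_id_assoc]

/-- Regular epi–mono factorization of an arbitrary morphism. -/
lemma image_fact (hkp : HasKernelPairs K) (hck : HasCoequalizersOfKernelPairs K)
    (hSG : StrongGenerator G) (hRP : RegularProjective G) {V W : K} (θ : V ⟶ W) :
    ∃ (I : K) (c : V ⟶ I) (m : I ⟶ W), c ≫ m = θ ∧ IsRegEpi c ∧ Mono m := by
  obtain ⟨KP, k0, k1, hk⟩ := hkp V W θ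
  obtain ⟨I, c, hc⟩ := hck KP V W θ k0 k1 hk
  obtain ⟨m, hm, hmu⟩ := hc.2 W θ hk.1
  have hcreg : IsRegEpi c := ⟨KP, k0, k1, hc⟩
  have hptinj : ∀ y z : G ⟶ I, y ≫ m = z ≫ m → y = z := by
    intro y z hyz
    obtain ⟨y', hy'⟩ := hRP V I c hcreg y
    obtain ⟨z', hz'⟩ := hRP V I c hcreg z
    have hyz' : y' ≫ θ = z' ≫ θ := by
      rw [← hm, ← Category.assoc, ← Category.assoc, hy', hz', hyz]
    obtain ⟨w, ⟨hw0, hw1⟩, _⟩ := hk.2 G y' z' hyz'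
    rw [← hy', ← hz', ← hw0, ← hw1, Category.assoc, Category.assoc, hc.1]
  refine ⟨I, c, m, hm, hcreg, ?_⟩
  constructor
  intro Z u v huv
  apply points_ext D hSG
  intro x
  exact hptinj _ _ (by rw [Category.assoc, Category.assoc, huv])

/-- Pointwise factorization through a collectively monic pair. -/
lemma factors_of_pointwise (hkp : HasKernelPairs K) (hck : HasCoequalizersOfKernelPairs K)
    (hSG : StrongGenerator G) (hRP : RegularProjective G) {R B : K} {r0 r1 : R ⟶ B}
    (hmono : CollectivelyMonic r0 r1) {S : K} (s0 s1 : S ⟶ B)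
    (hpt : ∀ x : G ⟶ S, ∃ w : G ⟶ R, w ≫ r0 = x ≫ s0 ∧ w ≫ r1 = x ≫ s1) :
    Factors r0 r1 s0 s1 := by
  choose w hw0 hw1 using hpt
  obtain ⟨KP, k0, k1, hk⟩ := hkp _ _ (D.can S)
  have hcoeq : IsCoequalizerOf k0 k1 (D.can S) :=
    extremal_coeq D hck hSG hRP (can_extremal D hSG S) hk
  set ρ : D.cop (G ⟶ S) ⟶ R := D.desc w with hρ
  have hρ0 : ρ ≫ r0 = D.can S ≫ s0 := by
    apply D.hom_ext
    intro x
    rw [← Category.assoc, ← Category.assoc, hρ, D.inj_desc, D.inj_can, hw0]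
  have hρ1 : ρ ≫ r1 = D.can S ≫ s1 := by
    apply D.hom_ext
    intro x
    rw [← Category.assoc, ← Category.assoc, hρ, D.inj_desc, D.inj_can, hw1]
  have hkρ : k0 ≫ ρ = k1 ≫ ρ := by
    apply points_ext D hSG
    intro z
    apply hmono G
    · rw [Category.assoc, Category.assoc, Category.assoc, Category.assoc, hρ0]
      simp only [← Category.assoc]
      rw [Category.assoc z k0 (D.can S), Category.assoc z k1 (D.can S), hk.1]
    · rw [Category.assoc, Category.assoc, Category.assoc, Category.assoc, hρ1]
      simp only [← Category.assoc]
      rw [Category.assoc z k0 (D.can S), Category.assoc z k1 (D.can S), hk.1]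
  obtain ⟨tt, htt, _⟩ := hcoeq.2 R ρ hkρ
  haveI : Epi (D.can S) := can_epi D hSG S
  refine ⟨tt, ?_, ?_⟩
  · have : D.can S ≫ tt ≫ r0 = D.can S ≫ s0 := by
      rw [← Category.assoc, htt, hρ0]
    exact (cancel_epi (D.can S)).mp this
  · have : D.can S ≫ tt ≫ r1 = D.can S ≫ s1 := by
      rw [← Category.assoc, htt, hρ1]
    exact (cancel_epi (D.can S)).mp this

end Aux3
section Aux4

variable {K : Type u} [Category.{v} K] {G : K} (D : CopData G)
include D

/-- Coequalizer of a `K(G,-)`-split pair, as a quotient with prescribed point-kernel. -/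
theorem split_quotient (hkp : HasKernelPairs K) (hck : HasCoequalizersOfKernelPairs K)
    (heff : EffectiveCongruences K) (hSG : StrongGenerator G) (hRP : RegularProjective G)
    {A B : K} (f g : A ⟶ B) {Cs : Type v}
    (q : (G ⟶ B) → Cs) (s : Cs → (G ⟶ B)) (t : (G ⟶ B) → (G ⟶ A))
    (hqfg : ∀ a : G ⟶ A, q (a ≫ f) = q (a ≫ g))
    (hft : ∀ b, t b ≫ f = b)
    (hgt : ∀ b, t b ≫ g = s (q b)) :
    ∃ (X : K) (e : B ⟶ X),
      (∀ y : G ⟶ X, ∃ b : G ⟶ B, b ≫ e = y) ∧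
      (∀ b b' : G ⟶ B, (b ≫ e = b' ≫ e ↔ q b = q b')) := by
  -- kernel pair of g, pushed forward along f
  obtain ⟨N, m0, m1, hN⟩ := hkp A B g
  obtain ⟨ρ0, hρ0def⟩ : ∃ h : N ⟶ B, h = m0 ≫ f := ⟨_, rfl⟩
  obtain ⟨ρ1, hρ1def⟩ : ∃ h : N ⟶ B, h = m1 ≫ f := ⟨_, rfl⟩
  -- kernel pair of ρ0
  obtain ⟨K0, a0, a1, hK0⟩ := hkp N B ρ0
  obtain ⟨xh, hxhdef⟩ : ∃ h : K0 ⟶ B, h = a0 ≫ ρ1 := ⟨_, rfl⟩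
  obtain ⟨yh, hyhdef⟩ : ∃ h : K0 ⟶ B, h = a1 ≫ ρ1 := ⟨_, rfl⟩
  -- the object of jointly-equalizing points
  obtain ⟨θ, hθdef⟩ : ∃ h : D.cop {κ : G ⟶ K0 // κ ≫ xh = κ ≫ yh} ⟶ K0,
      h = D.desc (fun κ => κ.1) := ⟨_, rfl⟩
  have hinjθ : ∀ κ, D.inj _ κ ≫ θ = κ.1 := by
    intro κ; rw [hθdef]; exact D.inj_desc _ κ
  have hθx : θ ≫ xh = θ ≫ yh := by
    apply D.hom_ext; intro κ
    rw [assoc_push (hinjθ κ) xh, assoc_push (hinjθ κ) yh]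
    exact κ.2
  obtain ⟨J, cΛ, jm, hcj, hcreg, hjm⟩ := image_fact D hkp hck hSG hRP θ
  obtain ⟨j0, hj0def⟩ : ∃ h : J ⟶ N, h = jm ≫ a0 := ⟨_, rfl⟩
  obtain ⟨j1, hj1def⟩ : ∃ h : J ⟶ N, h = jm ≫ a1 := ⟨_, rfl⟩
  have hcj0 : cΛ ≫ j0 = θ ≫ a0 := by rw [hj0def, ← Category.assoc, hcj]
  have hcj1 : cΛ ≫ j1 = θ ≫ a1 := by rw [hj1def, ← Category.assoc, hcj]
  have hjx : jm ≫ xh = jm ≫ yh := by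
    apply points_ext D hSG; intro p
    obtain ⟨z, hz⟩ := hRP _ _ cΛ hcreg p
    calc p ≫ jm ≫ xh = z ≫ cΛ ≫ jm ≫ xh := by rw [← hz, Category.assoc]
      _ = z ≫ θ ≫ xh := by rw [assoc_push hcj xh]
      _ = z ≫ θ ≫ yh := by rw [hθx]
      _ = z ≫ cΛ ≫ jm ≫ yh := by rw [assoc_push hcj yh]
      _ = p ≫ jm ≫ yh := by rw [← hz, Category.assoc]
  have hjρ0 : j0 ≫ ρ0 = j1 ≫ ρ0 := by
    rw [hj0def, hj1def, Category.assoc, Category.assoc, hK0.1]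
  have hjρ1 : j0 ≫ ρ1 = j1 ≫ ρ1 := by
    rw [hj0def, hj1def, Category.assoc, Category.assoc, ← hxhdef, ← hyhdef, hjx]
  -- points of J realize jointly related pairs
  have mkJ : ∀ (p p' : G ⟶ N), p ≫ ρ0 = p' ≫ ρ0 → p ≫ ρ1 = p' ≫ ρ1 →
      ∃ z : G ⟶ J, z ≫ j0 = p ∧ z ≫ j1 = p' := by
    intro p p' h0 h1
    obtain ⟨κ, ⟨hκ0, hκ1⟩, _⟩ := hK0.2 G p p' h0
    have hmem : κ ≫ xh = κ ≫ yh := by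
      rw [hxhdef, hyhdef, assoc_push hκ0 ρ1, assoc_push hκ1 ρ1, h1]
    refine ⟨D.inj _ ⟨κ, hmem⟩ ≫ cΛ, ?_, ?_⟩
    · calc (D.inj _ ⟨κ, hmem⟩ ≫ cΛ) ≫ j0 = D.inj _ ⟨κ, hmem⟩ ≫ cΛ ≫ j0 :=
          Category.assoc _ _ _
        _ = D.inj _ ⟨κ, hmem⟩ ≫ θ ≫ a0 := by rw [hcj0]
        _ = κ ≫ a0 := by rw [assoc_push (hinjθ ⟨κ, hmem⟩) a0]
        _ = p := hκ0
    · calc (D.inj _ ⟨κ, hmem⟩ ≫ cΛ) ≫ j1 = D.inj _ ⟨κ, hmem⟩ ≫ cΛ ≫ j1 :=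
          Category.assoc _ _ _
        _ = D.inj _ ⟨κ, hmem⟩ ≫ θ ≫ a1 := by rw [hcj1]
        _ = κ ≫ a1 := by rw [assoc_push (hinjθ ⟨κ, hmem⟩) a1]
        _ = p' := hκ1
  -- (j0, j1) is a congruence on N
  have hjmono : CollectivelyMonic j0 j1 := by
    intro S' u v h0 h1
    have h0' : (u ≫ jm) ≫ a0 = (v ≫ jm) ≫ a0 := by
      rw [Category.assoc, Category.assoc, ← hj0def, h0]
    have h1' : (u ≫ jm) ≫ a1 = (v ≫ jm) ≫ a1 := by
      rw [Category.assoc, Category.assoc, ← hj1def, h1]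
    have huv := kernel_pair_monic hK0 S' (u ≫ jm) (v ≫ jm) h0' h1'
    haveI := hjm
    exact (cancel_mono jm).mp huv
  have hjcong : IsCongruence j0 j1 := by
    refine ⟨hjmono, ?_, ?_, ?_⟩
    · intro S' s'
      apply factors_of_pointwise D hkp hck hSG hRP hjmono
      intro x
      exact mkJ (x ≫ s') (x ≫ s') rfl rfl
    · rintro S' s1 s2 ⟨tt, h1, h2⟩
      apply factors_of_pointwise D hkp hck hSG hRP hjmono
      intro x
      have e0 : s2 ≫ ρ0 = s1 ≫ ρ0 := by
        rw [← h1, ← h2, Category.assoc, Category.assoc, hjρ0]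
      have e1 : s2 ≫ ρ1 = s1 ≫ ρ1 := by
        rw [← h1, ← h2, Category.assoc, Category.assoc, hjρ1]
      exact mkJ (x ≫ s2) (x ≫ s1)
        (by rw [Category.assoc, Category.assoc, e0]) (by rw [Category.assoc, Category.assoc, e1])
    · rintro S' s1 s2 s3 ⟨tt, h1, h2⟩ ⟨uu, h3, h4⟩
      apply factors_of_pointwise D hkp hck hSG hRP hjmono
      intro x
      have e0 : s1 ≫ ρ0 = s3 ≫ ρ0 := by
        calc s1 ≫ ρ0 = tt ≫ j0 ≫ ρ0 := by rw [← h1, Category.assoc]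
          _ = tt ≫ j1 ≫ ρ0 := by rw [hjρ0]
          _ = s2 ≫ ρ0 := by rw [← Category.assoc, h2]
          _ = uu ≫ j0 ≫ ρ0 := by rw [← h3, Category.assoc]
          _ = uu ≫ j1 ≫ ρ0 := by rw [hjρ0]
          _ = s3 ≫ ρ0 := by rw [← Category.assoc, h4]
      have e1 : s1 ≫ ρ1 = s3 ≫ ρ1 := by
        calc s1 ≫ ρ1 = tt ≫ j0 ≫ ρ1 := by rw [← h1, Category.assoc]
          _ = tt ≫ j1 ≫ ρ1 := by rw [hjρ1]
          _ = s2 ≫ ρ1 := by rw [← Category.assoc, h2]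
          _ = uu ≫ j0 ≫ ρ1 := by rw [← h3, Category.assoc]
          _ = uu ≫ j1 ≫ ρ1 := by rw [hjρ1]
          _ = s3 ≫ ρ1 := by rw [← Category.assoc, h4]
      exact mkJ (x ≫ s1) (x ≫ s3)
        (by rw [Category.assoc, Category.assoc, e0]) (by rw [Category.assoc, Category.assoc, e1])
  -- quotient of N by the joint kernel congruence
  obtain ⟨ZV, hVm, hVkp⟩ := heff J N j0 j1 hjcong
  obtain ⟨RR, c, hcCoeq⟩ := hck J N ZV hVm j0 j1 hVkp
  have hcregR : IsRegEpi c := ⟨J, j0, j1, hcCoeq⟩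
  obtain ⟨r0, hr0, _⟩ := hcCoeq.2 B ρ0 hjρ0
  obtain ⟨r1, hr1, _⟩ := hcCoeq.2 B ρ1 hjρ1
  obtain ⟨wV, hwV, _⟩ := hcCoeq.2 ZV hVm hVkp.1
  have kerc : ∀ p p' : G ⟶ N, p ≫ c = p' ≫ c ↔
      ∃ z : G ⟶ J, z ≫ j0 = p ∧ z ≫ j1 = p' := by
    intro p p'
    constructor
    · intro h
      have hVeq : p ≫ hVm = p' ≫ hVm := by
        rw [← hwV, ← Category.assoc, ← Category.assoc, h]
      obtain ⟨z, hz, _⟩ := hVkp.2 G p p' hVeq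
      exact ⟨z, hz.1, hz.2⟩
    · rintro ⟨z, hz0, hz1⟩
      rw [← hz0, ← hz1, Category.assoc, Category.assoc, hcCoeq.1]
  -- the matrix of (r0, r1) is the kernel of q
  have matrixR : ∀ x y : G ⟶ B, (∃ w : G ⟶ RR, w ≫ r0 = x ∧ w ≫ r1 = y) ↔ q x = q y := by
    intro x y
    constructor
    · rintro ⟨w, hw0, hw1⟩
      obtain ⟨p, hp⟩ := hRP N RR c hcregR w
      have hx : x = (p ≫ m0) ≫ f := by
        rw [← hw0, ← hp, Category.assoc, hr0, hρ0def, ← Category.assoc]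
      have hy : y = (p ≫ m1) ≫ f := by
        rw [← hw1, ← hp, Category.assoc, hr1, hρ1def, ← Category.assoc]
      have hpg : (p ≫ m0) ≫ g = (p ≫ m1) ≫ g := by
        rw [Category.assoc, Category.assoc, hN.1]
      rw [hx, hy, hqfg (p ≫ m0), hpg, ← hqfg (p ≫ m1)]
    · intro hq
      have hgtt : t x ≫ g = t y ≫ g := by rw [hgt, hgt, hq]
      obtain ⟨p, ⟨hp0, hp1⟩, _⟩ := hN.2 G (t x) (t y) hgtt
      refine ⟨p ≫ c, ?_, ?_⟩
      · rw [Category.assoc, hr0, hρ0def, ← Category.assoc, hp0, hft]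
      · rw [Category.assoc, hr1, hρ1def, ← Category.assoc, hp1, hft]
  -- (r0, r1) is a congruence on B
  have hrmono : CollectivelyMonic r0 r1 := by
    intro S' u v h0 h1
    apply points_ext D hSG
    intro x
    obtain ⟨p, hp⟩ := hRP N RR c hcregR (x ≫ u)
    obtain ⟨p', hp'⟩ := hRP N RR c hcregR (x ≫ v)
    have e0 : p ≫ ρ0 = p' ≫ ρ0 := by
      rw [← hr0, ← Category.assoc, ← Category.assoc, hp, hp',
        Category.assoc, Category.assoc, h0]
    have e1 : p ≫ ρ1 = p' ≫ ρ1 := by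
      rw [← hr1, ← Category.assoc, ← Category.assoc, hp, hp',
        Category.assoc, Category.assoc, h1]
    obtain ⟨z, hz0, hz1⟩ := mkJ p p' e0 e1
    rw [← hp, ← hp']
    exact (kerc p p').mpr ⟨z, hz0, hz1⟩
  have hrcong : IsCongruence r0 r1 := by
    refine ⟨hrmono, ?_, ?_, ?_⟩
    · intro S' s'
      apply factors_of_pointwise D hkp hck hSG hRP hrmono
      intro x
      exact (matrixR (x ≫ s') (x ≫ s')).mpr rfl
    · rintro S' s1 s2 ⟨tt, h1, h2⟩
      apply factors_of_pointwise D hkp hck hSG hRP hrmono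
      intro x
      apply (matrixR (x ≫ s2) (x ≫ s1)).mpr
      have e1 : q (x ≫ s1) = q (x ≫ s2) :=
        (matrixR (x ≫ s1) (x ≫ s2)).mp
          ⟨x ≫ tt, by rw [Category.assoc, h1], by rw [Category.assoc, h2]⟩
      exact e1.symm
    · rintro S' s1 s2 s3 ⟨tt, h1, h2⟩ ⟨uu, h3, h4⟩
      apply factors_of_pointwise D hkp hck hSG hRP hrmono
      intro x
      apply (matrixR (x ≫ s1) (x ≫ s3)).mpr
      have e1 : q (x ≫ s1) = q (x ≫ s2) :=
        (matrixR (x ≫ s1) (x ≫ s2)).mp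
          ⟨x ≫ tt, by rw [Category.assoc, h1], by rw [Category.assoc, h2]⟩
      have e2 : q (x ≫ s2) = q (x ≫ s3) :=
        (matrixR (x ≫ s2) (x ≫ s3)).mp
          ⟨x ≫ uu, by rw [Category.assoc, h3], by rw [Category.assoc, h4]⟩
      exact e1.trans e2
  -- quotient of B by (r0, r1)
  obtain ⟨Z0, h0m, h0kp⟩ := heff RR B r0 r1 hrcong
  obtain ⟨X, e, heCoeq⟩ := hck RR B Z0 h0m r0 r1 h0kp
  refine ⟨X, e, ?_, ?_⟩
  · intro y
    exact hRP B X e ⟨RR, r0, r1, heCoeq⟩ y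
  · intro b b'
    constructor
    · intro h
      obtain ⟨w0, hw0e, _⟩ := heCoeq.2 Z0 h0m h0kp.1
      have hbe : b ≫ h0m = b' ≫ h0m := by
        rw [← hw0e, ← Category.assoc, ← Category.assoc, h]
      obtain ⟨w, ⟨hwa, hwb⟩, _⟩ := h0kp.2 G b b' hbe
      exact (matrixR b b').mp ⟨w, hwa, hwb⟩
    · intro hq
      obtain ⟨w, hwa, hwb⟩ := (matrixR b b').mpr hq
      rw [← hwa, ← hwb, Category.assoc, Category.assoc, heCoeq.1]

end Aux4
section Adj

variable {K : Type u} [Category.{v} K] {G : K} (D : CopData G)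

/-- The copower functor `M ↦ M·G`. -/
noncomputable def copFunctor : Type v ⥤ K where
  obj M := D.cop M
  map {M M'} u := D.desc (fun m => D.inj M' (u m))
  map_id M := by
    apply D.hom_ext; intro m; rw [D.inj_desc, Category.comp_id]; rfl
  map_comp {M M' M''} u w := by
    apply D.hom_ext; intro m
    rw [D.inj_desc, ← Category.assoc, D.inj_desc, D.inj_desc]; rfl

attribute [reducible] copFunctor

@[simp] lemma copFunctor_obj (M : Type v) : (copFunctor D).obj M = D.cop M := rfl

@[simp] lemma inj_copFunctor_map {M M' : Type v} (u : M ⟶ M') (m : M) :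
    D.inj M m ≫ (copFunctor D).map u = D.inj M' (u m) := D.inj_desc _ m

/-- The copower–hom adjunction. -/
noncomputable def copAdj : copFunctor D ⊣ coyoneda.obj (Opposite.op G) :=
  Adjunction.mkOfHomEquiv
    { homEquiv := fun M X =>
        { toFun := fun d => ↾(fun m => D.inj M m ≫ d)
          invFun := fun gs => D.desc gs
          left_inv := fun d => by apply D.hom_ext; intro m; rw [D.inj_desc]; rfl
          right_inv := fun gs => by ext m; exact D.inj_desc gs m }
      homEquiv_naturality_left_symm := by
        intro M' M X u gs
        apply D.hom_ext; intro m
        show D.inj M' m ≫ D.desc _ = D.inj M' m ≫ (copFunctor D).map u ≫ D.desc gs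
        rw [D.inj_desc, ← Category.assoc, inj_copFunctor_map, D.inj_desc]
        rfl
      homEquiv_naturality_right := by
        intro M X X' d k
        ext m
        show D.inj M m ≫ d ≫ k = (D.inj M m ≫ d) ≫ k
        rw [Category.assoc] }

lemma copAdj_unit_app (M : Type v) (m : M) : (copAdj D).unit.app M m = D.inj M m := by
  simp only [copAdj, Adjunction.mkOfHomEquiv_unit_app]
  exact Category.comp_id _

lemma copAdj_counit_app (X : K) : (copAdj D).counit.app X = D.can X := by
  simp only [copAdj, Adjunction.mkOfHomEquiv_counit_app]
  rfl

end Adj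
section Comparison

variable {K : Type u} [Category.{v} K] {G : K} (D : CopData G)
include D

lemma U_faithful (hSG : StrongGenerator G) : (coyoneda.obj (Opposite.op G) : K ⥤ Type v).Faithful := by
  constructor
  intro X Y u v h
  apply points_ext D hSG
  intro x
  exact types_congr_hom h x

lemma comparison_faithful (hSG : StrongGenerator G) :
    (Monad.comparison (copAdj D)).Faithful := by
  haveI := U_faithful D hSG
  infer_instance

lemma comparison_full (hkp : HasKernelPairs K) (hck : HasCoequalizersOfKernelPairs K)
    (hSG : StrongGenerator G) (hRP : RegularProjective G) :
    (Monad.comparison (copAdj D)).Full := by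
  constructor
  intro X Y ψ
  have hψf : ∀ x : G ⟶ X, ∃ y : G ⟶ Y, ψ.f x = y := fun x => ⟨ψ.f x, rfl⟩
  -- the map induced on copowers
  obtain ⟨uhat, huhatdef⟩ : ∃ h : D.cop (G ⟶ X) ⟶ Y, h = D.desc (fun x => ψ.f x) := ⟨_, rfl⟩
  have huhat : uhat = (copFunctor D).map ψ.f ≫ D.can Y := by
    rw [huhatdef]; apply D.hom_ext; intro x
    exact (D.inj_desc _ x).trans ((D.inj_can Y (ψ.f x)).symm.trans
      ((congrArg (· ≫ D.can Y) (inj_copFunctor_map D ψ.f x).symm).trans (Category.assoc _ _ _)))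
  have hpoint : ∀ p : G ⟶ D.cop (G ⟶ X), p ≫ uhat = ψ.f (p ≫ D.can X) := by
    intro p
    have law := types_congr_hom ψ.h p
    have l1 : ((copAdj D).toMonad : Type v ⥤ Type v).map ψ.f p = p ≫ (copFunctor D).map ψ.f := rfl
    have l2 : (((Monad.comparison (copAdj D)).obj Y).a) (p ≫ (copFunctor D).map ψ.f)
        = (p ≫ (copFunctor D).map ψ.f) ≫ (copAdj D).counit.app Y := rfl
    have l3 : (((Monad.comparison (copAdj D)).obj X).a) p = p ≫ (copAdj D).counit.app X := rfl
    have law' : (p ≫ (copFunctor D).map ψ.f) ≫ (copAdj D).counit.app Y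
        = ψ.f (p ≫ (copAdj D).counit.app X) := by
      have := law
      simp only [types_comp_apply] at this
      exact this
    rw [copAdj_counit_app, copAdj_counit_app] at law'
    rw [huhat]
    exact (Category.assoc p _ _).symm.trans law'
  obtain ⟨KP, k0, k1, hk⟩ := hkp _ _ (D.can X)
  have hco := extremal_coeq D hck hSG hRP (can_extremal D hSG X) hk
  have hkuhat : k0 ≫ uhat = k1 ≫ uhat := by
    apply points_ext D hSG
    intro z
    rw [← Category.assoc, ← Category.assoc, hpoint, hpoint, Category.assoc, Category.assoc, hk.1]
  obtain ⟨u, hu, _⟩ := hco.2 Y uhat hkuhat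
  refine ⟨u, ?_⟩
  apply Monad.Algebra.Hom.ext
  show (coyoneda.obj (Opposite.op G)).map u = ψ.f
  ext x
  show x ≫ u = ψ.f x
  rw [← D.inj_can X x, Category.assoc, hu, hpoint, D.inj_can]

lemma comparison_essSurj (hkp : HasKernelPairs K) (hck : HasCoequalizersOfKernelPairs K)
    (heff : EffectiveCongruences K) (hSG : StrongGenerator G) (hRP : RegularProjective G) :
    (Monad.comparison (copAdj D)).EssSurj := by
  constructor
  intro Aalg
  obtain ⟨M, α, hunit, hassoc⟩ := Aalg
  -- α : (G ⟶ D.cop M) → M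
  have hqs : ∀ m : M, α (D.inj M m) = m := by
    intro m
    have := types_congr_hom hunit m
    simp only [types_comp_apply] at this
    rw [show (copAdj D).toMonad.η.app M m = D.inj M m from copAdj_unit_app D M m] at this
    exact this
  have hqfg : ∀ a : G ⟶ D.cop (G ⟶ D.cop M),
      α (a ≫ D.can (D.cop M)) = α (a ≫ (copFunctor D).map α) := by
    intro a
    have := types_congr_hom hassoc a
    simp only [types_comp_apply] at this
    have l1 : (copAdj D).toMonad.μ.app M a = a ≫ (copAdj D).counit.app ((copFunctor D).obj M) :=
      rfl
    have l2 : ((copAdj D).toMonad : Type v ⥤ Type v).map α a = a ≫ (copFunctor D).map α := rfl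
    exact this
  have hft : ∀ b : G ⟶ D.cop M, D.inj (G ⟶ D.cop M) b ≫ D.can (D.cop M) = b := fun b =>
    D.inj_can _ b
  have hgt : ∀ b : G ⟶ D.cop M,
      D.inj (G ⟶ D.cop M) b ≫ (copFunctor D).map α = D.inj M (α b) := fun b =>
    inj_copFunctor_map D α b
  obtain ⟨X, e, hsurj, hker⟩ := split_quotient D hkp hck heff hSG hRP
    (D.can (D.cop M)) ((copFunctor D).map α) α (D.inj M) (D.inj (G ⟶ D.cop M)) hqfg hft hgt
  -- the comparison of X is isomorphic to the given algebra
  obtain ⟨β, hβdef⟩ : ∃ h : M → (G ⟶ X), h = fun m => D.inj M m ≫ e := ⟨_, rfl⟩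
  have hβ : Function.Bijective β := by
    constructor
    · intro m m' h
      have : α (D.inj M m) = α (D.inj M m') := by
        apply (hker (D.inj M m) (D.inj M m')).mp
        rw [hβdef] at h; exact h
      rw [hqs, hqs] at this; exact this
    · intro y
      obtain ⟨b, hb⟩ := hsurj y
      refine ⟨α b, ?_⟩
      rw [hβdef]
      show D.inj M (α b) ≫ e = y
      rw [← hb]
      exact (hker (D.inj M (α b)) b).mpr (hqs (α b))
  have hFβ : (copFunctor D).map (↾β) ≫ D.can X = e := by
    apply D.hom_ext; intro m
    rw [← Category.assoc, inj_copFunctor_map, D.inj_can, hβdef]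
    rfl
  have w : ((copAdj D).toMonad : Type v ⥤ Type v).map (↾β) ≫
      ((Monad.comparison (copAdj D)).obj X).a
      = (Monad.Algebra.mk M α hunit hassoc).a ≫ ↾β := by
    ext (p : G ⟶ D.cop M)
    show (((copAdj D).toMonad : Type v ⥤ Type v).map (↾β) p) ≫ (copAdj D).counit.app X = β (α p)
    have l1 : ((copAdj D).toMonad : Type v ⥤ Type v).map (↾β) p = p ≫ (copFunctor D).map (↾β) := rfl
    rw [l1, copAdj_counit_app, Category.assoc, hFβ, hβdef]
    show p ≫ e = D.inj M (α p) ≫ e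
    exact ((hker p (D.inj M (α p))).mpr (hqs (α p)).symm)
  refine ⟨X, ⟨?_⟩⟩
  exact (Monad.Algebra.isoMk ((Equiv.ofBijective β hβ).toIso) w).symm

lemma comparison_isEquivalence (hkp : HasKernelPairs K) (hck : HasCoequalizersOfKernelPairs K)
    (heff : EffectiveCongruences K) (hSG : StrongGenerator G) (hRP : RegularProjective G) :
    (Monad.comparison (copAdj D)).IsEquivalence :=
  { faithful := comparison_faithful D hSG
    full := comparison_full D hkp hck hSG hRP
    essSurj := comparison_essSurj D hkp hck heff hSG hRP }

end Comparison
section Filtered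

open Limits

variable {K : Type u} [Category.{v} K] {G : K} (D : CopData G)

/-- Point-cancellation for copower maps along injective functions. -/
lemma cancel_copower_inj {W₁ W₂ : Type v} {ij : W₁ → W₂} (hinj : Function.Injective ij)
    {a b : G ⟶ D.cop W₁}
    (h : a ≫ (copFunctor D).map (↾ij) = b ≫ (copFunctor D).map (↾ij)) : a = b := by
  rcases isEmpty_or_nonempty W₁ with hE | hN
  · have hr : (copFunctor D).map (↾ij) ≫ D.desc (fun _ => a) = 𝟙 (D.cop W₁) :=
      D.hom_ext (fun m => hE.elim m)
    calc a = a ≫ (copFunctor D).map (↾ij) ≫ D.desc (fun _ => a) := by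
          rw [hr, Category.comp_id]
      _ = b ≫ (copFunctor D).map (↾ij) ≫ D.desc (fun _ => a) := by
          rw [← Category.assoc, h, Category.assoc]
      _ = b := by rw [hr, Category.comp_id]
  · have hr : (copFunctor D).map (↾ij) ≫ (copFunctor D).map (↾(Function.invFun ij)) = 𝟙 (D.cop W₁) := by
      apply D.hom_ext; intro m
      rw [← Category.assoc, inj_copFunctor_map, inj_copFunctor_map,
        TypeCat.ofHom_apply, TypeCat.ofHom_apply, Function.leftInverse_invFun hinj m, Category.comp_id]
    calc a = a ≫ (copFunctor D).map (↾ij) ≫ (copFunctor D).map (↾(Function.invFun ij)) := by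
          rw [hr, Category.comp_id]
      _ = b ≫ (copFunctor D).map (↾ij) ≫ (copFunctor D).map (↾(Function.invFun ij)) := by
          rw [← Category.assoc, h, Category.assoc]
      _ = b := by rw [hr, Category.comp_id]

/-- Factorization through a finite sub-copower, with a chosen ambient finite set. -/
lemma af_factor (hAF : AbstractlyFinite G) {M : Type v} (x : G ⟶ D.cop M) :
    ∃ (S : Set M), S.Finite ∧
      ∃ x₀ : G ⟶ D.cop S, x₀ ≫ (copFunctor D).map (↾(fun m : S => (m : M))) = x := by
  obtain ⟨S, hSfin, hS⟩ := hAF M (D.cop M) (D.inj M) (D.isCop M) x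
  refine ⟨S, hSfin, ?_⟩
  obtain ⟨x₀, hx₀⟩ := hS (D.cop S) (D.inj S) ((copFunctor D).map (↾(fun m : S => (m : M))))
    (D.isCop S) (fun m => inj_copFunctor_map D _ m)
  exact ⟨x₀, hx₀⟩

/-- Enlarging the finite set in a finite factorization. -/
lemma af_enlarge {M : Type v} {S S' : Set M} (hsub : S ⊆ S')
    {x : G ⟶ D.cop M} {x₀ : G ⟶ D.cop S}
    (hx : x₀ ≫ (copFunctor D).map (↾(fun m : S => (m : M))) = x) :
    ∃ x₁ : G ⟶ D.cop S', x₁ ≫ (copFunctor D).map (↾(fun m : S' => (m : M))) = x := by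
  refine ⟨x₀ ≫ (copFunctor D).map (↾(fun m : S => (⟨m.1, hsub m.2⟩ : S'))), ?_⟩
  rw [Category.assoc, ← Functor.map_comp]
  exact hx

end Filtered
section Filtered2

open Limits

variable {K : Type u} [Category.{v} K] {G : K} (D : CopData G)
variable {J : Type v} [SmallCategory J] [IsFiltered J]

lemma stage_eq (hAF : AbstractlyFinite G) {Dg : J ⥤ Type v} {c : Cocone Dg}
    (hc : IsColimit c) (j : J) (x y : G ⟶ D.cop (Dg.obj j))
    (hxy : x ≫ (copFunctor D).map (c.ι.app j) = y ≫ (copFunctor D).map (c.ι.app j)) :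
    ∃ (k : J) (h : j ⟶ k),
      x ≫ (copFunctor D).map (Dg.map h) = y ≫ (copFunctor D).map (Dg.map h) := by
  classical
  obtain ⟨S₁, hS₁fin, x₁, hx₁⟩ := af_factor D hAF x
  obtain ⟨S₂, hS₂fin, y₁, hy₁⟩ := af_factor D hAF y
  set S : Set (Dg.obj j) := S₁ ∪ S₂ with hSdef
  obtain ⟨x₀, hx₀⟩ := af_enlarge D (show S₁ ⊆ S from Set.subset_union_left) hx₁
  obtain ⟨y₀, hy₀⟩ := af_enlarge D (show S₂ ⊆ S from Set.subset_union_right) hy₁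
  have hSfin : S.Finite := hS₁fin.union hS₂fin
  haveI : Fintype S := hSfin.fintype
  have key : ∀ (P : Finset (S × S)), (∀ p ∈ P, c.ι.app j p.1.1 = c.ι.app j p.2.1) →
      ∃ (k : J) (h : j ⟶ k), ∀ p ∈ P, Dg.map h p.1.1 = Dg.map h p.2.1 := by
    intro P
    induction P using Finset.induction_on with
    | empty => exact fun _ => ⟨j, 𝟙 j, fun p hp => absurd hp (Finset.notMem_empty p)⟩
    | @insert a P hnm ih =>
      intro hall
      obtain ⟨k, h, hk⟩ := ih (fun p hp => hall p (Finset.mem_insert_of_mem hp))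
      have ha : c.ι.app j a.1.1 = c.ι.app j a.2.1 := hall a (Finset.mem_insert_self a P)
      obtain ⟨k1, f1, g1, hfg⟩ := (Types.FilteredColimit.isColimit_eq_iff Dg hc).mp ha
      have hnew : Dg.map (f1 ≫ IsFiltered.coeqHom f1 g1) a.1.1
          = Dg.map (f1 ≫ IsFiltered.coeqHom f1 g1) a.2.1 := by
        calc Dg.map (f1 ≫ IsFiltered.coeqHom f1 g1) a.1.1
            = Dg.map (IsFiltered.coeqHom f1 g1) (Dg.map f1 a.1.1) := by
              rw [Dg.map_comp]; rfl
          _ = Dg.map (IsFiltered.coeqHom f1 g1) (Dg.map g1 a.2.1) := by rw [hfg]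
          _ = Dg.map (g1 ≫ IsFiltered.coeqHom f1 g1) a.2.1 := by rw [Dg.map_comp]; rfl
          _ = Dg.map (f1 ≫ IsFiltered.coeqHom f1 g1) a.2.1 := by
              rw [← IsFiltered.coeq_condition]
      set h1 : j ⟶ IsFiltered.coeq f1 g1 := f1 ≫ IsFiltered.coeqHom f1 g1 with hh1
      set m := IsFiltered.max k (IsFiltered.coeq f1 g1)
      set lα := IsFiltered.leftToMax k (IsFiltered.coeq f1 g1)
      set rβ := IsFiltered.rightToMax k (IsFiltered.coeq f1 g1)
      set ch2 := IsFiltered.coeqHom (h ≫ lα) (h1 ≫ rβ)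
      refine ⟨_, h ≫ lα ≫ ch2, ?_⟩
      intro p hp
      rcases Finset.mem_insert.mp hp with rfl | hp'
      · have e1 : h ≫ lα ≫ ch2 = h1 ≫ rβ ≫ ch2 := by
          rw [← Category.assoc, ← Category.assoc]
          exact IsFiltered.coeq_condition _ _
        rw [e1, Functor.map_comp, types_comp_apply, types_comp_apply, hnew]
      · rw [Functor.map_comp, types_comp_apply, types_comp_apply, hk p hp']
  obtain ⟨k, h, hkall⟩ := key
    (Finset.univ.filter (fun p : S × S => c.ι.app j p.1.1 = c.ι.app j p.2.1))
    (fun p hp => (Finset.mem_filter.mp hp).2)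
  have hker : ∀ m m' : S, c.ι.app j m.1 = c.ι.app j m'.1 → Dg.map h m.1 = Dg.map h m'.1 := by
    intro m m' hφ
    exact hkall (m, m') (Finset.mem_filter.mpr ⟨Finset.mem_univ _, hφ⟩)
  set φv : S → c.pt := fun m => c.ι.app j m.1 with hφv
  set ψv : S → Dg.obj k := fun m => Dg.map h m.1 with hψv
  set pQ : S → Set.range φv := fun m => ⟨φv m, ⟨m, rfl⟩⟩ with hpQ
  set bm : Set.range φv → Dg.obj k := fun qe => ψv qe.2.choose with hbm
  have hcomm : ∀ m : S, bm (pQ m) = ψv m := by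
    intro m
    have hc1 : φv ((pQ m).2.choose) = φv m := (pQ m).2.choose_spec
    exact hker _ _ hc1
  have hQc : x₀ ≫ (copFunctor D).map (↾pQ) = y₀ ≫ (copFunctor D).map (↾pQ) := by
    apply cancel_copower_inj D
      (Subtype.val_injective : Function.Injective (fun q : Set.range φv => (q : c.pt)))
    rw [Category.assoc, Category.assoc, ← Functor.map_comp]
    show x₀ ≫ (copFunctor D).map ((↾(fun m : S => (m : Dg.obj j))) ≫ c.ι.app j)
        = y₀ ≫ (copFunctor D).map ((↾(fun m : S => (m : Dg.obj j))) ≫ c.ι.app j)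
    rw [Functor.map_comp, ← Category.assoc, ← Category.assoc, hx₀, hy₀]
    exact hxy
  have hψQ : (copFunctor D).map (↾ψv)
      = (copFunctor D).map (↾pQ) ≫ (copFunctor D).map (↾bm) := by
    rw [← Functor.map_comp]
    congr 1
    ext m
    exact (hcomm m).symm
  have hcompx : x ≫ (copFunctor D).map (Dg.map h) = x₀ ≫ (copFunctor D).map (↾ψv) := by
    rw [← hx₀, Category.assoc, ← Functor.map_comp]
    rfl
  have hcompy : y ≫ (copFunctor D).map (Dg.map h) = y₀ ≫ (copFunctor D).map (↾ψv) := by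
    rw [← hy₀, Category.assoc, ← Functor.map_comp]
    rfl
  refine ⟨k, h, ?_⟩
  rw [hcompx, hcompy, hψQ, ← Category.assoc, ← Category.assoc, hQc]

lemma monad_preserves_filtered (hAF : AbstractlyFinite G) :
    PreservesColimitsOfShape J ((copAdj D).toMonad.toFunctor) := by
  constructor
  intro Dg
  constructor
  intro c hc
  constructor
  apply Types.FilteredColimit.isColimitOf
  · -- joint surjectivity
    rintro (x : G ⟶ D.cop c.pt)
    obtain ⟨S, hSfin, x₀, hx₀⟩ := af_factor D hAF (x : G ⟶ D.cop c.pt)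
    haveI : Fintype S := hSfin.fintype
    classical
    have hel : ∀ m : S, ∃ (jm : J) (ym : Dg.obj jm), c.ι.app jm ym = m.1 := by
      intro m
      obtain ⟨jm, ym, hy⟩ := Types.jointly_surjective_of_isColimit hc m.1
      exact ⟨jm, ym, hy⟩
    choose jm ym hym using hel
    obtain ⟨jS, hjS⟩ := IsFiltered.sup_objs_exists (Finset.univ.image jm)
    have harr : ∀ m : S, Nonempty (jm m ⟶ jS) := fun m =>
      hjS (Finset.mem_image_of_mem jm (Finset.mem_univ m))
    refine ⟨jS, x₀ ≫ (copFunctor D).map (↾(fun m : S => Dg.map (harr m).some (ym m))), ?_⟩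
    show x = (x₀ ≫ (copFunctor D).map (↾(fun m : S => Dg.map (harr m).some (ym m))))
      ≫ (copFunctor D).map (c.ι.app jS)
    rw [Category.assoc, ← Functor.map_comp]
    have hfn : ((↾(fun m : S => Dg.map (harr m).some (ym m))) ≫ c.ι.app jS)
        = (↾(fun m : S => (m : c.pt))) := by
      ext m
      show c.ι.app jS (Dg.map (harr m).some (ym m)) = m.1
      have hw := types_congr_hom (c.w (harr m).some) (ym m)
      simp only [types_comp_apply] at hw
      rw [hw, hym]
    rw [hfn]
    exact hx₀.symm
  · -- equalization at a finite stage
    rintro i j (xi : G ⟶ D.cop (Dg.obj i)) (xj : G ⟶ D.cop (Dg.obj j)) hij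
    have hij' : xi ≫ (copFunctor D).map (c.ι.app i) = xj ≫ (copFunctor D).map (c.ι.app j) := hij
    have hmerge : (xi ≫ (copFunctor D).map (Dg.map (IsFiltered.leftToMax i j)))
        ≫ (copFunctor D).map (c.ι.app (IsFiltered.max i j))
        = (xj ≫ (copFunctor D).map (Dg.map (IsFiltered.rightToMax i j)))
        ≫ (copFunctor D).map (c.ι.app (IsFiltered.max i j)) := by
      rw [Category.assoc, Category.assoc, ← Functor.map_comp, ← Functor.map_comp,
        c.w (IsFiltered.leftToMax i j), c.w (IsFiltered.rightToMax i j)]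
      exact hij'
    obtain ⟨k, h, hk⟩ := stage_eq D hAF hc (IsFiltered.max i j) _ _ hmerge
    refine ⟨k, IsFiltered.leftToMax i j ≫ h, IsFiltered.rightToMax i j ≫ h, ?_⟩
    show xi ≫ (copFunctor D).map (Dg.map (IsFiltered.leftToMax i j ≫ h))
        = xj ≫ (copFunctor D).map (Dg.map (IsFiltered.rightToMax i j ≫ h))
    rw [Dg.map_comp, Functor.map_comp, ← Category.assoc, Dg.map_comp, Functor.map_comp,
      ← Category.assoc]
    exact hk

end Filtered2

/-- for a varietal generator `G` in a category with kernel pairs,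
coequalizers of kernel pairs and effective congruences, the hom-functor
`K(G,−) : K ⥤ Set` is monadic and the induced monad preserves filtered colimits. -/
theorem stmt7 {K : Type u} [Category.{v} K]
    (hkp : HasKernelPairs K) (hck : HasCoequalizersOfKernelPairs K)
    (heff : EffectiveCongruences K) (G : K) (hG : VarietalGenerator G) :
    ∃ (F : Type v ⥤ K) (adj : F ⊣ coyoneda.obj (Opposite.op G)),
      (Monad.comparison adj).IsEquivalence ∧
        ∀ (J : Type v) [SmallCategory J] [IsFiltered J],
          Limits.PreservesColimitsOfShape J adj.toMonad.toFunctor := by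
  obtain ⟨hCop, hSG, hAF, hRP⟩ := hG
  refine ⟨copFunctor (CopData.ofHasCopowers hCop), copAdj (CopData.ofHasCopowers hCop),
    comparison_isEquivalence (CopData.ofHasCopowers hCop) hkp hck heff hSG hRP, ?_⟩
  intro J _ _
  exact monad_preserves_filtered (CopData.ofHasCopowers hCop) hAF

end Paper
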